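/- In the tiling of ℝ where (−∞,0] is tiled by unit intervals, and [0,∞) is partitioned by the points a_n = 2^{2^n} − 2 into blocks [a_{2n}, a_{2n+1}] tiled by length-2 intervals and [a_{2n−1}, a_{2n}] tiled by unit intervals, one has d̲₂(1) = 1 < d̄₂(1) = 2. -/

import Mathlib

/-- `a n = 2^(2^n) − 2`. -/
noncomputable def a14 : ℕ → ℝ := fun n => 2 ^ (2 ^ n) - 2

/-- The set of endpoints of the tiles of the tiling of `ℝ` in which `(−∞,0]` is tiled
by unit intervals, `[a (2n), a (2n+1)]` is tiled by length-2 intervals, and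
`[a (2n+1), a (2n+2)]` is tiled by unit intervals. -/
def E14 : Set ℝ :=
  {x | (∃ k : ℕ, x = -(k : ℝ)) ∨
       (∃ n k : ℕ, x = a14 (2 * n) + 2 * k ∧ x ≤ a14 (2 * n + 1)) ∨
       (∃ n k : ℕ, x = a14 (2 * n + 1) + k ∧ x ≤ a14 (2 * n + 2))}

/-- The combinatorial patch distance: `n14 x y + 1` is the minimal number of
consecutive tiles covering an interval containing both `x` and `y`, which equals one
plus the number of tile endpoints strictly between `x` and `y`. -/
noncomputable def n14 (x y : ℝ) : ℕ := (E14 ∩ Set.Ioo (min x y) (max x y)).ncard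

open Filter Set

open Filter Set

lemma a14_def (n : ℕ) : a14 n = 2 ^ (2 ^ n) - 2 := rfl

lemma a14_even (n : ℕ) : ∃ m : ℕ, a14 n = 2 * m := by
  refine ⟨2 ^ (2 ^ n - 1) - 1, ?_⟩
  have h1 : 1 ≤ 2 ^ n := Nat.one_le_two_pow
  have h2 : (1:ℕ) ≤ 2 ^ (2 ^ n - 1) := Nat.one_le_two_pow
  have : (2:ℝ) ^ (2^n) = 2 * 2 ^ (2^n - 1) := by
    rw [← pow_succ']
    congr 1
    omega
  push_cast [Nat.cast_sub h2]
  rw [a14_def, this]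
  push_cast
  ring

lemma a14_int (n : ℕ) : ∃ m : ℤ, a14 n = m := by
  obtain ⟨m, hm⟩ := a14_even n
  exact ⟨2 * m, by push_cast [hm]; ring⟩

lemma a14_zero : a14 0 = 0 := by norm_num [a14_def]

lemma a14_strictMono : StrictMono a14 := by
  intro m n hmn
  have : (2:ℕ) ^ m < 2 ^ n := Nat.pow_lt_pow_right one_lt_two hmn
  simp only [a14_def, sub_lt_sub_iff_right]
  exact pow_lt_pow_right₀ one_lt_two this

lemma a14_nonneg (n : ℕ) : 0 ≤ a14 n := by
  rw [← a14_zero]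
  exact a14_strictMono.monotone (Nat.zero_le n)

lemma a14_ge (n : ℕ) : (n : ℝ) ≤ a14 n := by
  have h1 : n + 2 ≤ 2 ^ (2 ^ n) := by
    calc n + 2 ≤ 2^n + 2^n := by
          have := Nat.lt_two_pow_self (n := n)
          have : n + 1 ≤ 2 ^ n := this
          omega
      _ = 2 ^ (n+1) := by ring
      _ ≤ 2 ^ (2^n) := Nat.pow_le_pow_right (by norm_num) (Nat.succ_le_of_lt (Nat.lt_two_pow_self (n := n)))
  have : ((n:ℝ) + 2) ≤ 2 ^ (2^n) := by exact_mod_cast h1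
  rw [a14_def]; linarith

lemma a14_tendsto : Tendsto a14 atTop atTop :=
  tendsto_atTop_mono a14_ge tendsto_natCast_atTop_atTop

lemma a14_succ (n : ℕ) : a14 (n+1) = (a14 n)^2 + 4 * a14 n + 2 := by
  have : (2:ℝ) ^ (2 ^ (n+1)) = (2 ^ (2^n))^2 := by
    rw [← pow_mul, pow_succ]
  rw [a14_def, a14_def, this]
  ring

lemma a14_sq_le (n : ℕ) : (a14 n)^2 ≤ a14 (n+1) := by
  have := a14_nonneg n
  rw [a14_succ]; nlinarith


lemma cast_toNat_le {z : ℤ} {r : ℝ} (h : (z:ℝ) ≤ r) (hr : 0 ≤ r) : ((z.toNat : ℕ) : ℝ) ≤ r := by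
  rcases le_or_gt z 0 with h0 | h0
  · simp [Int.toNat_of_nonpos h0, hr]
  · have : ((z.toNat:ℤ):ℝ) ≤ r := by rw [Int.toNat_of_nonneg h0.le]; exact h
    exact_mod_cast this

lemma le_cast_toNat {z : ℤ} {r : ℝ} (h : r ≤ (z:ℝ)) : r ≤ ((z.toNat : ℕ) : ℝ) := by
  refine h.trans ?_
  exact_mod_cast Int.self_le_toNat z

lemma ncard_upper {c a b : ℝ} (hc : 0 < c) (hab : a ≤ b) (S : Set ℝ)
    (hS : ∀ y ∈ S, ∃ m : ℤ, y = c * m) :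
    (S ∩ Set.Ioo a b).Finite ∧ ((S ∩ Set.Ioo a b).ncard : ℝ) ≤ (b - a)/c + 1 := by
  set T : Finset ℝ := (Finset.Ioo ⌊a/c⌋ ⌈b/c⌉).image (fun m : ℤ => c * (m:ℝ)) with hT
  have hsub : S ∩ Set.Ioo a b ⊆ ↑T := by
    rintro y ⟨hyS, hy1, hy2⟩
    obtain ⟨m, rfl⟩ := hS y hyS
    simp only [hT, Finset.coe_image, Set.mem_image, Finset.mem_coe, Finset.mem_Ioo]
    refine ⟨m, ⟨Int.floor_lt.mpr ((div_lt_iff₀ hc).mpr (by linarith)),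
      Int.lt_ceil.mpr ((lt_div_iff₀ hc).mpr (by linarith))⟩, rfl⟩
  have hfin : (S ∩ Set.Ioo a b).Finite := (T.finite_toSet).subset hsub
  refine ⟨hfin, ?_⟩
  have h1 : (S ∩ Set.Ioo a b).ncard ≤ T.card := by
    rw [← Set.ncard_coe_finset]
    exact Set.ncard_le_ncard hsub (T.finite_toSet)
  have h2 : T.card ≤ (⌈b/c⌉ - ⌊a/c⌋ - 1).toNat := by
    refine (Finset.card_image_le).trans ?_
    rw [Int.card_Ioo]
  have h3 : ((⌈b/c⌉ - ⌊a/c⌋ - 1 : ℤ) : ℝ) ≤ (b-a)/c + 1 := by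
    have hb := Int.ceil_lt_add_one (b/c)
    have ha := Int.sub_one_lt_floor (a/c)
    push_cast
    rw [sub_div]
    linarith
  have h0 : (0:ℝ) ≤ (b-a)/c + 1 := by
    have : (0:ℝ) ≤ (b-a)/c := div_nonneg (by linarith) hc.le
    linarith
  calc ((S ∩ Set.Ioo a b).ncard : ℝ) ≤ ((⌈b/c⌉ - ⌊a/c⌋ - 1).toNat : ℝ) := by
        exact_mod_cast h1.trans h2
    _ ≤ (b-a)/c + 1 := cast_toNat_le h3 h0

lemma ncard_lower {c a b : ℝ} (hc : 0 < c) (S : Set ℝ) (hfin : (S ∩ Set.Ioo a b).Finite)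
    (hS : ∀ m : ℤ, a < c * m → c * m < b → (c * (m:ℝ)) ∈ S) :
    (b - a)/c - 1 ≤ ((S ∩ Set.Ioo a b).ncard : ℝ) := by
  set T : Finset ℝ := (Finset.Ioo ⌊a/c⌋ ⌈b/c⌉).image (fun m : ℤ => c * (m:ℝ)) with hT
  have hsub : ↑T ⊆ S ∩ Set.Ioo a b := by
    intro y hy
    simp only [hT, Finset.coe_image, Set.mem_image, Finset.mem_coe, Finset.mem_Ioo] at hy
    obtain ⟨m, ⟨hm1, hm2⟩, rfl⟩ := hy
    have ha : a < c * m := by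
      have h1 : a/c < (⌊a/c⌋ : ℝ) + 1 := Int.lt_floor_add_one _
      have h2 : (⌊a/c⌋ : ℝ) + 1 ≤ m := by exact_mod_cast hm1
      calc a = c * (a/c) := by field_simp
        _ < c * m := by exact mul_lt_mul_of_pos_left (h1.trans_le h2) hc
    have hb : c * m < b := by
      have h1 : (⌈b/c⌉ : ℝ) < b/c + 1 := Int.ceil_lt_add_one _
      have h2 : (m:ℝ) + 1 ≤ ⌈b/c⌉ := by exact_mod_cast hm2
      have : (m:ℝ) < b / c := by linarith
      calc c * m < c * (b/c) := mul_lt_mul_of_pos_left this hc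
        _ = b := by field_simp
    exact ⟨hS m ha hb, ha, hb⟩
  have hinj : Function.Injective (fun m : ℤ => c * (m:ℝ)) := by
    intro m n h
    simp only at h
    exact_mod_cast mul_left_cancel₀ (ne_of_gt hc) h
  have h1 : T.card = (⌈b/c⌉ - ⌊a/c⌋ - 1).toNat := by
    rw [hT, Finset.card_image_of_injective _ hinj, Int.card_Ioo]
  have h2 : T.card ≤ (S ∩ Set.Ioo a b).ncard := by
    rw [← Set.ncard_coe_finset]
    exact Set.ncard_le_ncard hsub hfin
  have h3 : (b-a)/c - 1 ≤ ((⌈b/c⌉ - ⌊a/c⌋ - 1 : ℤ) : ℝ) := by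
    have hb := Int.le_ceil (b/c)
    have ha := Int.floor_le (a/c)
    push_cast
    rw [sub_div]
    linarith
  calc (b-a)/c - 1 ≤ ((⌈b/c⌉ - ⌊a/c⌋ - 1).toNat : ℝ) := le_cast_toNat h3
    _ ≤ ((S ∩ Set.Ioo a b).ncard : ℝ) := by rw [h1] at h2; exact_mod_cast h2

lemma E14_subset_int : ∀ y ∈ E14, ∃ m : ℤ, y = 1 * (m:ℝ) := by
  rintro y (⟨k, rfl⟩ | ⟨n, k, rfl, -⟩ | ⟨n, k, rfl, -⟩)
  · exact ⟨-k, by push_cast; ring⟩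
  · obtain ⟨m, hm⟩ := a14_int (2*n)
    exact ⟨m + 2*k, by push_cast [hm]; ring⟩
  · obtain ⟨m, hm⟩ := a14_int (2*n+1)
    exact ⟨m + k, by push_cast [hm]; ring⟩

lemma exists_block (m : ℤ) (hm : 0 < m) :
    ∃ n : ℕ, a14 (2*n) ≤ 2*(m:ℝ) ∧ 2*(m:ℝ) < a14 (2*(n+1)) := by
  classical
  have hex : ∃ n : ℕ, 2*(m:ℝ) < a14 (2*n) := by
    obtain ⟨n, hn⟩ := exists_nat_gt (2*(m:ℝ))
    exact ⟨n, hn.trans_le ((a14_ge n).trans (a14_strictMono.monotone (by omega)))⟩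
  let n₀ := Nat.find hex
  have hn₀ := Nat.find_spec hex
  have h0 : n₀ ≠ 0 := by
    intro h
    have h' : Nat.find hex = 0 := h
    have hthis := hn₀
    rw [h'] at hthis
    norm_num [a14_zero] at hthis
    have : (0:ℝ) < m := by exact_mod_cast hm
    linarith
  refine ⟨n₀ - 1, ?_, ?_⟩
  · have := Nat.find_min hex (m := n₀ - 1) (by omega)
    linarith [not_lt.mp this]
  · have : n₀ - 1 + 1 = n₀ := by omega
    rw [this]
    exact hn₀

lemma even_mem_E14 (m : ℤ) : (2 * (m:ℝ)) ∈ E14 := by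
  rcases le_or_gt m 0 with hm | hm
  · left
    refine ⟨(-(2*m)).toNat, ?_⟩
    have h : (0:ℤ) ≤ -(2*m) := by omega
    have : (((-(2*m)).toNat : ℤ) : ℝ) = ((-(2*m) : ℤ) : ℝ) := by rw [Int.toNat_of_nonneg h]
    push_cast at this ⊢
    linarith
  · obtain ⟨n, hn1, hn2⟩ := exists_block m hm
    obtain ⟨m0, hm0⟩ := a14_even (2*n)
    rcases le_or_gt (2*(m:ℝ)) (a14 (2*n+1)) with h | h
    · right; left
      have hle : (m0 : ℝ) ≤ (m:ℝ) := by rw [hm0] at hn1; linarith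
      have hle' : (m0 : ℤ) ≤ m := by exact_mod_cast hle
      refine ⟨n, (m - m0).toNat, ?_, h⟩
      have : (((m - m0).toNat : ℤ) : ℝ) = ((m - m0 : ℤ) : ℝ) := by
        rw [Int.toNat_of_nonneg (by omega)]
      push_cast at this
      rw [hm0]
      push_cast
      linarith
    · right; right
      obtain ⟨m1, hm1⟩ := a14_even (2*n+1)
      have hle : (2 * m1 : ℝ) ≤ 2*m := by rw [hm1] at h; linarith
      have hle' : (2 * (m1:ℤ)) ≤ 2*m := by exact_mod_cast hle
      refine ⟨n, (2*m - 2*m1).toNat, ?_, ?_⟩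
      · have : (((2*m - 2*m1).toNat : ℤ) : ℝ) = ((2*m - 2*m1 : ℤ) : ℝ) := by
          rw [Int.toNat_of_nonneg (by omega)]
        push_cast at this
        rw [hm1]
        push_cast
        linarith
      · have : 2*(n+1) = 2*n+2 := by ring
        rw [this] at hn2
        linarith
  
lemma odd_block_int_mem (n : ℕ) (m : ℤ) (h1 : a14 (2*n+1) ≤ (m:ℝ))
    (h2 : (m:ℝ) ≤ a14 (2*n+2)) : (m:ℝ) ∈ E14 := by
  right; right
  obtain ⟨m1, hm1⟩ := a14_even (2*n+1)
  have hle : (2*(m1:ℤ)) ≤ m := by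
    rw [hm1] at h1
    exact_mod_cast h1
  refine ⟨n, (m - 2*m1).toNat, ?_, h2⟩
  have : (((m - 2*m1).toNat : ℤ) : ℝ) = ((m - 2*m1 : ℤ) : ℝ) := by
    rw [Int.toNat_of_nonneg (by omega)]
  push_cast at this
  rw [hm1]
  push_cast
  linarith

lemma even_block_even (n : ℕ) : ∀ y ∈ E14, a14 (2*n) < y → y < a14 (2*n+1) →
    ∃ m : ℤ, y = 2 * (m:ℝ) := by
  rintro y (⟨k, rfl⟩ | ⟨j, k, rfl, hle⟩ | ⟨j, k, rfl, hle⟩) h1 h2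
  · exfalso
    have : (0:ℝ) ≤ a14 (2*n) := a14_nonneg _
    have : -(k:ℝ) ≤ 0 := neg_nonpos.mpr (by positivity)
    linarith
  · have hj : j = n := by
      by_contra hne
      rcases lt_or_gt_of_ne hne with hlt | hgt
      · have : a14 (2*j+1) ≤ a14 (2*n) := a14_strictMono.monotone (by omega)
        have hk : (0:ℝ) ≤ 2*(k:ℝ) := by positivity
        linarith
      · have : a14 (2*n+1) ≤ a14 (2*j) := a14_strictMono.monotone (by omega)
        have hk : (0:ℝ) ≤ 2*(k:ℝ) := by positivity
        linarith
    obtain ⟨m0, hm0⟩ := a14_even (2*n)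
    exact ⟨m0 + k, by rw [hj, hm0]; push_cast; ring⟩
  · exfalso
    have hk : (0:ℝ) ≤ (k:ℝ) := by positivity
    rcases le_or_gt (2*j+2) (2*n) with hc | hc
    · have : a14 (2*j+2) ≤ a14 (2*n) := a14_strictMono.monotone hc
      linarith
    · have : a14 (2*n+1) ≤ a14 (2*j+1) := a14_strictMono.monotone (by omega)
      linarith

lemma n14_pos_eq (x t : ℝ) (ht : 0 < t) :
    n14 x (x + t) = (E14 ∩ Set.Ioo x (x + t)).ncard := by
  rw [n14, min_eq_left (by linarith), max_eq_right (by linarith)]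

lemma n14_upper (x t : ℝ) (ht : 0 ≤ t) : ((n14 x (x + t) : ℕ) : ℝ) ≤ t + 1 := by
  rcases eq_or_lt_of_le ht with h | h
  · have : n14 x (x + t) = 0 := by
      rw [n14, ← h, add_zero]
      simp
    rw [this]; push_cast; linarith
  · rw [n14_pos_eq x t h]
    have := (ncard_upper one_pos (by linarith : x ≤ x + t) E14 E14_subset_int).2
    calc ((E14 ∩ Set.Ioo x (x+t)).ncard : ℝ) ≤ ((x+t) - x)/1 + 1 := this
      _ = t + 1 := by ring

lemma n14_fin (a b : ℝ) (hab : a ≤ b) : (E14 ∩ Set.Ioo a b).Finite :=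
  (ncard_upper one_pos hab E14 E14_subset_int).1

lemma n14_lower (x t : ℝ) (ht : 0 < t) : t/2 - 1 ≤ ((n14 x (x + t) : ℕ) : ℝ) := by
  rw [n14_pos_eq x t ht]
  have := ncard_lower (two_pos) E14 (n14_fin x (x+t) (by linarith))
    (fun m _ _ => even_mem_E14 m)
  calc t/2 - 1 = ((x+t) - x)/2 - 1 := by ring
    _ ≤ _ := this

lemma n14_block_upper (x : ℝ) (k : ℕ) (hx : x < a14 (2*k)) :
    ((n14 x (a14 (2*k+1)) : ℕ) : ℝ) ≤ a14 (2*k+1)/2 + a14 (2*k)/2 - x + 3 := by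
  set A0 := a14 (2*k)
  set A1 := a14 (2*k+1)
  have hA : A0 < A1 := a14_strictMono (by omega)
  have hxA1 : x < A1 := hx.trans hA
  have heq : n14 x A1 = (E14 ∩ Set.Ioo x A1).ncard := by
    rw [n14, min_eq_left hxA1.le, max_eq_right hxA1.le]
  have hsub : E14 ∩ Set.Ioo x A1 ⊆ (E14 ∩ Set.Ioo x A0) ∪ ({A0} ∪ (E14 ∩ Set.Ioo A0 A1)) := by
    rintro y ⟨hy, hy1, hy2⟩
    rcases lt_trichotomy y A0 with h | h | h
    · exact Or.inl ⟨hy, hy1, h⟩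
    · exact Or.inr (Or.inl (by simp [h]))
    · exact Or.inr (Or.inr ⟨hy, h, hy2⟩)
  have hcard : (E14 ∩ Set.Ioo x A1).ncard ≤
      (E14 ∩ Set.Ioo x A0).ncard + (({A0} : Set ℝ).ncard + (E14 ∩ Set.Ioo A0 A1).ncard) := by
    refine (Set.ncard_le_ncard hsub ?_).trans ?_
    · exact ((n14_fin x A0 hx.le).union ((Set.finite_singleton _).union
        (n14_fin A0 A1 hA.le)))
    · exact (Set.ncard_union_le _ _).trans (by
        gcongr
        exact Set.ncard_union_le _ _)
  have h1 : ((E14 ∩ Set.Ioo x A0).ncard : ℝ) ≤ (A0 - x) + 1 := by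
    have := (ncard_upper one_pos hx.le E14 E14_subset_int).2
    calc ((E14 ∩ Set.Ioo x A0).ncard : ℝ) ≤ (A0 - x)/1 + 1 := this
      _ = (A0 - x) + 1 := by ring
  have h2 : (({A0} : Set ℝ).ncard : ℝ) = 1 := by simp
  have h3 : ((E14 ∩ Set.Ioo A0 A1).ncard : ℝ) ≤ (A1 - A0)/2 + 1 := by
    set S := E14 ∩ Set.Ioo A0 A1 with hS
    have hSS : S ∩ Set.Ioo A0 A1 = E14 ∩ Set.Ioo A0 A1 := by
      rw [hS, Set.inter_assoc, Set.inter_self]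
    have := (ncard_upper two_pos hA.le S ?_).2
    · rw [hSS] at this
      exact this
    · intro y hy
      obtain ⟨m, hm⟩ := even_block_even k y hy.1 hy.2.1 hy.2.2
      exact ⟨m, hm⟩
  rw [heq]
  have := hcard
  have hc : ((E14 ∩ Set.Ioo x A1).ncard : ℝ) ≤
      ((E14 ∩ Set.Ioo x A0).ncard : ℝ) + (({A0} : Set ℝ).ncard : ℝ)
        + ((E14 ∩ Set.Ioo A0 A1).ncard : ℝ) := by
    push_cast
    exact_mod_cast by push_cast at this ⊢; linarith [this]
  linarith

lemma n14_block_lower (x : ℝ) (k : ℕ) (hx : x ≤ a14 (2*k+1)) :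
    a14 (2*k+2) - a14 (2*k+1) - 1 ≤ ((n14 x (a14 (2*k+2)) : ℕ) : ℝ) := by
  set A1 := a14 (2*k+1)
  set A2 := a14 (2*k+2)
  have hA : A1 < A2 := a14_strictMono (by omega)
  have hxA2 : x < A2 := lt_of_le_of_lt hx hA
  have heq : n14 x A2 = (E14 ∩ Set.Ioo x A2).ncard := by
    rw [n14, min_eq_left hxA2.le, max_eq_right hxA2.le]
  have hsub : E14 ∩ Set.Ioo A1 A2 ⊆ E14 ∩ Set.Ioo x A2 := by
    rintro y ⟨hy, hy1, hy2⟩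
    exact ⟨hy, lt_of_le_of_lt hx hy1, hy2⟩
  have hmono := Set.ncard_le_ncard hsub (n14_fin x A2 hxA2.le)
  have hlow : (A2 - A1)/1 - 1 ≤ ((E14 ∩ Set.Ioo A1 A2).ncard : ℝ) := by
    refine ncard_lower one_pos E14 (n14_fin A1 A2 hA.le) ?_
    intro m h1 h2
    rw [one_mul] at h1 h2 ⊢
    exact odd_block_int_mem k m h1.le h2.le
  rw [heq]
  have : ((E14 ∩ Set.Ioo A1 A2).ncard : ℝ) ≤ ((E14 ∩ Set.Ioo x A2).ncard : ℝ) := by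
    exact_mod_cast hmono
  calc A2 - A1 - 1 = (A2 - A1)/1 - 1 := by ring
    _ ≤ _ := hlow.trans this

lemma tendsto_ratio_helper (u v : ℕ → ℝ) (c1 c2 α β : ℝ) (hu : Tendsto u atTop atTop)
    (hv : Tendsto (fun k => v k / u k) atTop (nhds 0)) (hα : 0 < α) :
    Tendsto (fun k => (u k + c1)/(α * u k + β * v k + c2)) atTop (nhds (1/α)) := by
  have h1 : Tendsto (fun k => (u k)⁻¹) atTop (nhds 0) := hu.inv_tendsto_atTop
  have hB : Tendsto (fun k => α + β * (v k / u k) + c2 * (u k)⁻¹) atTop (nhds α) := by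
    have := ((tendsto_const_nhds (x := α) (f := (atTop : Filter ℕ))).add
      (hv.const_mul β)).add (h1.const_mul c2)
    simpa using this
  have hN : Tendsto (fun k => 1 + c1 * (u k)⁻¹) atTop (nhds 1) := by
    have := (tendsto_const_nhds (x := (1:ℝ)) (f := (atTop : Filter ℕ))).add (h1.const_mul c1)
    simpa using this
  have main : Tendsto (fun k => (1 + c1 * (u k)⁻¹)/(α + β * (v k / u k) + c2 * (u k)⁻¹))
      atTop (nhds (1/α)) := hN.div hB hα.ne'
  refine Tendsto.congr' ?_ main
  have hupos : ∀ᶠ k in atTop, 0 < u k := hu.eventually_gt_atTop 0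
  have hDpos : ∀ᶠ k in atTop, 0 < α + β * (v k / u k) + c2 * (u k)⁻¹ :=
    hB.eventually (eventually_gt_nhds (by linarith))
  filter_upwards [hupos, hDpos] with k hk hD
  have hne : u k ≠ 0 := hk.ne'
  have hDne : α + β * (v k / u k) + c2 * (u k)⁻¹ ≠ 0 := hD.ne'
  field_simp

lemma tendsto_two_mul_add_one : Tendsto (fun k : ℕ => 2*k+1) atTop atTop := by
  apply tendsto_atTop_mono (fun k => ?_) tendsto_id
  simp only [id]
  omega

lemma a14_pos (n : ℕ) (hn : 1 ≤ n) : 0 < a14 n := by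
  have := a14_ge n
  have : (1:ℝ) ≤ a14 n := le_trans (by exact_mod_cast hn) this
  linarith

lemma ratio_a14 : Tendsto (fun n => a14 n / a14 (n+1)) atTop (nhds 0) := by
  have h1 : Tendsto (fun n => (a14 n)⁻¹) atTop (nhds 0) := a14_tendsto.inv_tendsto_atTop
  refine tendsto_of_tendsto_of_tendsto_of_le_of_le' tendsto_const_nhds h1 ?_ ?_
  · filter_upwards [eventually_ge_atTop 1] with n hn
    exact div_nonneg (a14_nonneg n) (a14_nonneg (n+1))
  · filter_upwards [eventually_ge_atTop 1] with n hn
    have hp : 0 < a14 n := a14_pos n hn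
    have hsq : (a14 n)^2 ≤ a14 (n+1) := a14_sq_le n
    have hsqpos : 0 < (a14 n)^2 := by positivity
    calc a14 n / a14 (n+1) ≤ a14 n / (a14 n)^2 :=
          div_le_div_of_nonneg_left hp.le hsqpos hsq
      _ = (a14 n)⁻¹ := by field_simp

lemma ratio_a14_odd : Tendsto (fun k : ℕ => a14 (2*k+1) / a14 (2*k+2)) atTop (nhds 0) := by
  have := ratio_a14.comp tendsto_two_mul_add_one
  refine this.congr (fun k => ?_)
  simp only [Function.comp]

lemma a14_comp_tendsto (c : ℕ) : Tendsto (fun k : ℕ => a14 (2*k+c)) atTop atTop := by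
  refine a14_tendsto.comp (tendsto_atTop_mono (fun k => ?_) tendsto_id)
  simp only [id]
  omega

lemma ratio_a14_even : Tendsto (fun k : ℕ => a14 (2*k) / a14 (2*k+1)) atTop (nhds 0) := by
  have h2k : Tendsto (fun k : ℕ => 2*k) atTop atTop := by
    refine tendsto_atTop_mono (fun k => ?_) tendsto_id
    simp only [id]; omega
  have := ratio_a14.comp h2k
  refine this.congr (fun k => ?_)
  simp only [Function.comp]

lemma T1 : Tendsto (fun t : ℝ => t/(t+1)) atTop (nhds 1) := by
  have h1 : Tendsto (fun t : ℝ => t⁻¹) atTop (nhds 0) := tendsto_inv_atTop_zero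
  have hB : Tendsto (fun t : ℝ => 1 + t⁻¹) atTop (nhds 1) := by
    simpa using (tendsto_const_nhds (x := (1:ℝ)) (f := (atTop:Filter ℝ))).add h1
  have main : Tendsto (fun t : ℝ => (1 + t⁻¹)⁻¹) atTop (nhds 1) := by
    simpa using hB.inv₀ one_ne_zero
  refine Tendsto.congr' ?_ main
  filter_upwards [eventually_gt_atTop (0:ℝ)] with t ht
  have h1 : t ≠ 0 := ht.ne'
  have h2 : t + 1 ≠ 0 := by linarith
  field_simp

lemma T2 : Tendsto (fun t : ℝ => t/(t/2-1)) atTop (nhds 2) := by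
  have h1 : Tendsto (fun t : ℝ => t⁻¹) atTop (nhds 0) := tendsto_inv_atTop_zero
  have hB : Tendsto (fun t : ℝ => 1/2 - t⁻¹) atTop (nhds (1/2)) := by
    simpa using (tendsto_const_nhds (x := (1/2:ℝ)) (f := (atTop:Filter ℝ))).sub h1
  have main : Tendsto (fun t : ℝ => (1/2 - t⁻¹)⁻¹) atTop (nhds 2) := by
    have := hB.inv₀ (by norm_num : (1/2:ℝ) ≠ 0)
    norm_num at this
    exact this
  refine Tendsto.congr' ?_ main
  filter_upwards [eventually_gt_atTop (3:ℝ)] with t ht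
  have h1 : t ≠ 0 := by linarith
  have h2 : t/2 - 1 ≠ 0 := by intro h; nlinarith
  field_simp

lemma tendsto_a14_even : Tendsto (fun k : ℕ => a14 (2*k)) atTop atTop := by
  refine a14_tendsto.comp (tendsto_atTop_mono (fun k => ?_) tendsto_id)
  simp only [id]; omega

lemma tendsto_a14_odd : Tendsto (fun k : ℕ => a14 (2*k+1)) atTop atTop := by
  refine a14_tendsto.comp (tendsto_atTop_mono (fun k => ?_) tendsto_id)
  simp only [id]; omega

lemma tendsto_a14_even2 : Tendsto (fun k : ℕ => a14 (2*k+2)) atTop atTop := by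
  refine a14_tendsto.comp (tendsto_atTop_mono (fun k => ?_) tendsto_id)
  simp only [id]; omega

section perx
variable (x : ℝ)

local notation "f" => fun t : ℝ => t / (n14 x (x + t) : ℝ)

lemma f_glob : ∀ᶠ t in (atTop : Filter ℝ),
    t/(t+1) ≤ f t ∧ f t ≤ t/(t/2-1) ∧ 0 ≤ f t ∧ f t ≤ 6 := by
  filter_upwards [eventually_ge_atTop (3:ℝ)] with t ht
  have ht0 : (0:ℝ) ≤ t := by linarith
  have hN1 : ((n14 x (x+t) : ℕ) : ℝ) ≤ t + 1 := n14_upper x t ht0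
  have hN2 : t/2 - 1 ≤ ((n14 x (x+t) : ℕ) : ℝ) := n14_lower x t (by linarith)
  have hNpos : (0:ℝ) < ((n14 x (x+t) : ℕ) : ℝ) := by linarith
  have hpos2 : (0:ℝ) < t/2 - 1 := by linarith
  refine ⟨?_, ?_, ?_, ?_⟩
  · exact div_le_div_of_nonneg_left ht0 hNpos hN1
  · exact div_le_div_of_nonneg_left ht0 hpos2 hN2
  · exact div_nonneg ht0 hNpos.le
  · refine le_trans (div_le_div_of_nonneg_left ht0 hpos2 hN2) ?_
    rw [div_le_iff₀ hpos2]
    linarith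

lemma f_bddAbove : (atTop : Filter ℝ).IsBoundedUnder (· ≤ ·) f :=
  isBoundedUnder_of_eventually_le ((f_glob x).mono (fun t ht => ht.2.2.2))

lemma f_bddBelow : (atTop : Filter ℝ).IsBoundedUnder (· ≥ ·) f :=
  isBoundedUnder_of_eventually_ge ((f_glob x).mono (fun t ht => ht.2.2.1))

lemma limsup_f : Filter.limsup f (atTop : Filter ℝ) = 2 := by
  have hub : Filter.limsup f (atTop : Filter ℝ) ≤ 2 := by
    have h1 : Filter.limsup f (atTop : Filter ℝ) ≤
        Filter.limsup (fun t : ℝ => t/(t/2-1)) atTop := by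
      refine Filter.limsup_le_limsup ((f_glob x).mono (fun t ht => ht.2.1)) ?_ ?_
      · exact (f_bddBelow x).isCoboundedUnder_le
      · exact T2.isBoundedUnder_le
    rwa [T2.limsup_eq] at h1
  -- lower bound via subsequence
  obtain ⟨tk, htkdef⟩ : ∃ tk : ℕ → ℝ, tk = fun k => a14 (2*k+1) - x := ⟨_, rfl⟩
  have htk : Tendsto tk atTop atTop := by
    have := tendsto_atTop_add_const_right atTop (-x) tendsto_a14_odd
    refine this.congr (fun k => ?_)
    simp only [htkdef, sub_eq_add_neg]
  have hL : Tendsto (fun k => (a14 (2*k+1) + (-x)) /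
      ((1/2) * a14 (2*k+1) + (1/2) * a14 (2*k) + (3 - x))) atTop (nhds 2) := by
    have := tendsto_ratio_helper (fun k => a14 (2*k+1)) (fun k => a14 (2*k)) (-x) (3-x)
      (1/2) (1/2) tendsto_a14_odd ratio_a14_even (by norm_num)
    norm_num at this ⊢
    exact this
  have hcomp : Tendsto (fun k => f (tk k)) atTop (nhds 2) := by
    refine tendsto_of_tendsto_of_tendsto_of_le_of_le' hL (T2.comp htk) ?_ ?_
    · filter_upwards [htk.eventually_ge_atTop 3, tendsto_a14_even.eventually_gt_atTop x]
        with k h3 hx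
      have ht0 : (0:ℝ) ≤ tk k := by linarith
      have hxt : x + tk k = a14 (2*k+1) := by simp only [htkdef]; ring
      have hN2 : tk k/2 - 1 ≤ ((n14 x (x + tk k) : ℕ) : ℝ) := n14_lower x (tk k) (by linarith)
      have hNpos : (0:ℝ) < ((n14 x (x + tk k) : ℕ) : ℝ) := by linarith
      have hNub : ((n14 x (x + tk k) : ℕ) : ℝ) ≤
          (1/2) * a14 (2*k+1) + (1/2) * a14 (2*k) + (3 - x) := by
        rw [hxt]
        calc ((n14 x (a14 (2*k+1)) : ℕ) : ℝ) ≤ a14 (2*k+1)/2 + a14 (2*k)/2 - x + 3 :=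
              n14_block_upper x k hx
          _ = (1/2) * a14 (2*k+1) + (1/2) * a14 (2*k) + (3 - x) := by ring
      have hnum : a14 (2*k+1) + (-x) = tk k := by simp only [htkdef]; ring
      rw [hnum]
      exact div_le_div_of_nonneg_left ht0 hNpos hNub
    · filter_upwards [htk.eventually_ge_atTop 3] with k h3
      have ht0 : (0:ℝ) ≤ tk k := by linarith
      have hN2 : tk k/2 - 1 ≤ ((n14 x (x + tk k) : ℕ) : ℝ) := n14_lower x (tk k) (by linarith)
      have hpos2 : (0:ℝ) < tk k/2 - 1 := by linarith
      exact div_le_div_of_nonneg_left ht0 hpos2 hN2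
  have hmap : Filter.map tk atTop ≤ (atTop : Filter ℝ) := htk
  have hbmap : (Filter.map tk atTop).IsBoundedUnder (· ≥ ·) f := by
    rw [Filter.IsBoundedUnder, Filter.map_map]
    exact hcomp.isBoundedUnder_ge
  have h3 : Filter.limsup f (Filter.map tk atTop) ≤ Filter.limsup f (atTop : Filter ℝ) :=
    Filter.limsup_le_limsup_of_le hmap hbmap.isCoboundedUnder_le (f_bddAbove x)
  have h4 : Filter.limsup f (Filter.map tk atTop) = 2 := by
    rw [Filter.limsup, Filter.map_map]
    exact hcomp.limsup_eq
  linarith [h4 ▸ h3]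

lemma liminf_f : Filter.liminf f (atTop : Filter ℝ) = 1 := by
  have hlb : 1 ≤ Filter.liminf f (atTop : Filter ℝ) := by
    have h1 : Filter.liminf (fun t : ℝ => t/(t+1)) atTop ≤
        Filter.liminf f (atTop : Filter ℝ) := by
      refine Filter.liminf_le_liminf ((f_glob x).mono (fun t ht => ht.1)) ?_ ?_
      · exact T1.isBoundedUnder_ge
      · exact (f_bddAbove x).isCoboundedUnder_ge
    rwa [T1.liminf_eq] at h1
  obtain ⟨sk, hskdef⟩ : ∃ sk : ℕ → ℝ, sk = fun k => a14 (2*k+2) - x := ⟨_, rfl⟩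
  have hsk : Tendsto sk atTop atTop := by
    have := tendsto_atTop_add_const_right atTop (-x) tendsto_a14_even2
    refine this.congr (fun k => ?_)
    simp only [hskdef, sub_eq_add_neg]
  have hU : Tendsto (fun k => (a14 (2*k+2) + (-x)) /
      (1 * a14 (2*k+2) + (-1) * a14 (2*k+1) + (-1))) atTop (nhds 1) := by
    have := tendsto_ratio_helper (fun k => a14 (2*k+2)) (fun k => a14 (2*k+1)) (-x) (-1)
      1 (-1) tendsto_a14_even2 ratio_a14_odd one_pos
    norm_num at this ⊢
    exact this
  have hcomp : Tendsto (fun k => f (sk k)) atTop (nhds 1) := by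
    refine tendsto_of_tendsto_of_tendsto_of_le_of_le' (T1.comp hsk) hU ?_ ?_
    · filter_upwards [hsk.eventually_ge_atTop 3] with k h3
      have ht0 : (0:ℝ) ≤ sk k := by linarith
      have hN1 : ((n14 x (x + sk k) : ℕ) : ℝ) ≤ sk k + 1 := n14_upper x (sk k) ht0
      have hN2 : sk k/2 - 1 ≤ ((n14 x (x + sk k) : ℕ) : ℝ) := n14_lower x (sk k) (by linarith)
      have hNpos : (0:ℝ) < ((n14 x (x + sk k) : ℕ) : ℝ) := by linarith
      exact div_le_div_of_nonneg_left ht0 hNpos hN1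
    · filter_upwards [hsk.eventually_ge_atTop 3, tendsto_a14_odd.eventually_ge_atTop x]
        with k h3 hx
      have ht0 : (0:ℝ) ≤ sk k := by linarith
      have hxs : x + sk k = a14 (2*k+2) := by simp only [hskdef]; ring
      have ha14 := a14_succ (2*k+1)
      have hann : a14 (2*k+1+1) = a14 (2*k+2) := by norm_num
      have hDpos : (0:ℝ) < a14 (2*k+2) - a14 (2*k+1) - 1 := by
        have h0 := a14_nonneg (2*k+1)
        rw [hann] at ha14
        nlinarith
      have hNlb : a14 (2*k+2) - a14 (2*k+1) - 1 ≤ ((n14 x (x + sk k) : ℕ) : ℝ) := by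
        rw [hxs]
        exact n14_block_lower x k hx
      have hden : 1 * a14 (2*k+2) + (-1) * a14 (2*k+1) + (-1)
          = a14 (2*k+2) - a14 (2*k+1) - 1 := by ring
      have hnum : a14 (2*k+2) + (-x) = sk k := by simp only [hskdef]; ring
      rw [hnum, hden]
      exact div_le_div_of_nonneg_left ht0 hDpos hNlb
  have hmap : Filter.map sk atTop ≤ (atTop : Filter ℝ) := hsk
  have hbmap : (Filter.map sk atTop).IsBoundedUnder (· ≤ ·) f := by
    rw [Filter.IsBoundedUnder, Filter.map_map]
    exact hcomp.isBoundedUnder_le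
  have h3 : Filter.liminf f (atTop : Filter ℝ) ≤ Filter.liminf f (Filter.map sk atTop) :=
    Filter.liminf_le_liminf_of_le hmap (f_bddBelow x) hbmap.isCoboundedUnder_ge
  have h4 : Filter.liminf f (Filter.map sk atTop) = 1 := by
    rw [Filter.liminf, Filter.map_map]
    exact hcomp.liminf_eq
  linarith [h4 ▸ h3]

end perx

/-- for this tiling, `d̲₂(1) = 1 < d̄₂(1) = 2`. -/
theorem stmt_14 :
    (⨅ x : ℝ, Filter.liminf (fun t : ℝ => t / (n14 x (x + t) : ℝ)) Filter.atTop) = 1 ∧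
    (⨆ x : ℝ, Filter.limsup (fun t : ℝ => t / (n14 x (x + t) : ℝ)) Filter.atTop) = 2 := by
  constructor
  · calc (⨅ x : ℝ, Filter.liminf (fun t : ℝ => t / (n14 x (x + t) : ℝ)) Filter.atTop)
        = ⨅ _ : ℝ, (1:ℝ) := iInf_congr (fun x => liminf_f x)
      _ = 1 := ciInf_const
  · calc (⨆ x : ℝ, Filter.limsup (fun t : ℝ => t / (n14 x (x + t) : ℝ)) Filter.atTop)
        = ⨆ _ : ℝ, (2:ℝ) := iSup_congr (fun x => limsup_f x)
      _ = 2 := ciSup_const
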